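/- If a weighted finite graph G is bipartite, then h(k) + h̄(k) = 1 for each natural number 1 ≤ k ≤ N. -/

import Mathlib

open Finset

namespace DualCheeger

variable {N : ℕ}

/-- The degree of a vertex `u`: `d_u = ∑_v w u v`. -/
def degree (w : Fin N → Fin N → ℝ) (u : Fin N) : ℝ := ∑ v, w u v

/-- A weighted finite graph structure on `Fin N`: symmetric nonnegative weights,
no self-loops, and strictly positive degrees. -/
def IsWeightedGraph (w : Fin N → Fin N → ℝ) : Prop :=
  (∀ u v, w u v = w v u) ∧ (∀ u v, 0 ≤ w u v) ∧ (∀ u, w u u = 0) ∧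
    ∀ u, 0 < degree w u

/-- `|E(A,B)| = ∑_{u ∈ A} ∑_{v ∈ B} w u v`. -/
def Ew (w : Fin N → Fin N → ℝ) (A B : Finset (Fin N)) : ℝ :=
  ∑ u ∈ A, ∑ v ∈ B, w u v

/-- `vol(A) = ∑_{u ∈ A} d_u`. -/
def vol (w : Fin N → Fin N → ℝ) (A : Finset (Fin N)) : ℝ := ∑ u ∈ A, degree w u

/-- The expansion `φ(S) = |E(S, Sᶜ)| / vol(S)`. -/
noncomputable def expansion (w : Fin N → Fin N → ℝ) (S : Finset (Fin N)) : ℝ :=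
  Ew w S Sᶜ / vol w S

/-- `φ̄(V₁,V₂) = 2|E(V₁,V₂)| / vol(V₁ ∪ V₂)`. -/
noncomputable def phibar (w : Fin N → Fin N → ℝ) (V₁ V₂ : Finset (Fin N)) : ℝ :=
  2 * Ew w V₁ V₂ / vol w (V₁ ∪ V₂)

/-- A `k`-subpartition: `k` nonempty pairwise disjoint subsets. -/
def IsSubpartition (k : ℕ) (P : Fin k → Finset (Fin N)) : Prop :=
  (∀ i, (P i).Nonempty) ∧ ∀ i j, i ≠ j → Disjoint (P i) (P j)

/-- The `k`-way Cheeger constant `h(k)`. -/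
noncomputable def cheeger (w : Fin N → Fin N → ℝ) (k : ℕ) : ℝ :=
  sInf { x | ∃ P : Fin k → Finset (Fin N), IsSubpartition k P ∧
    x = ⨆ i, expansion w (P i) }

/-- A `k`-sub-bipartition: `k` pairs of subsets, all `2k` subsets pairwise
disjoint, with each union `V_{2i-1} ∪ V_{2i}` nonempty. -/
def IsSubBipartition (k : ℕ) (P : Fin k → Finset (Fin N) × Finset (Fin N)) : Prop :=
  (∀ i, Disjoint (P i).1 (P i).2) ∧
    (∀ i j, i ≠ j → Disjoint ((P i).1 ∪ (P i).2) ((P j).1 ∪ (P j).2)) ∧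
    ∀ i, ((P i).1 ∪ (P i).2).Nonempty

/-- The `k`-way dual Cheeger constant `h̄(k)`. -/
noncomputable def dualCheeger (w : Fin N → Fin N → ℝ) (k : ℕ) : ℝ :=
  sSup { x | ∃ P : Fin k → Finset (Fin N) × Finset (Fin N), IsSubBipartition k P ∧
    x = ⨅ i, phibar w (P i).1 (P i).2 }

/-- `lam` enumerates the eigenvalues of the normalized Laplacian
`Δ f (u) = f u - d_u⁻¹ ∑_v w u v * f v` in nondecreasing order with multiplicity,
witnessed by a `μ`-orthonormal eigenbasis `f`. -/
def IsLapEigenbasis (w : Fin N → Fin N → ℝ) (lam : Fin N → ℝ)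
    (f : Fin N → Fin N → ℝ) : Prop :=
  Monotone lam ∧
    (∀ i j, (∑ u, degree w u * f i u * f j u) = if i = j then (1 : ℝ) else 0) ∧
    ∀ i u, f i u - (degree w u)⁻¹ * ∑ v, w u v * f i v = lam i * f i u

/-- The dual Rayleigh quotient of a function `f : V → ℝ`. -/
noncomputable def dualRayleigh (w : Fin N → Fin N → ℝ) (f : Fin N → ℝ) : ℝ :=
  (1 / 2 * ∑ u, ∑ v, w u v * (f u + f v) ^ 2) / ∑ u, degree w u * f u ^ 2

/-- The dual Rayleigh quotient of a map `F : V → ℝ^k`. -/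
noncomputable def dualRayleighVec (w : Fin N → Fin N → ℝ) {k : ℕ}
    (F : Fin N → EuclideanSpace ℝ (Fin k)) : ℝ :=
  (1 / 2 * ∑ u, ∑ v, w u v * ‖F u + F v‖ ^ 2) / ∑ u, degree w u * ‖F u‖ ^ 2

/-- The rough projective-space distance `d̄_F` between (the projections of)
`F u` and `F v`. -/
noncomputable def dbar {k : ℕ} (F : Fin N → EuclideanSpace ℝ (Fin k))
    (u v : Fin N) : ℝ :=
  min ‖‖F u‖⁻¹ • F u - ‖F v‖⁻¹ • F v‖ ‖‖F u‖⁻¹ • F u + ‖F v‖⁻¹ • F v‖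

/-- The `l²` mass of `F` on `S`: `ℰ_S = ∑_{u ∈ S} d_u ‖F u‖²`. -/
noncomputable def mass (w : Fin N → Fin N → ℝ) {k : ℕ}
    (F : Fin N → EuclideanSpace ℝ (Fin k)) (S : Finset (Fin N)) : ℝ :=
  ∑ u ∈ S, degree w u * ‖F u‖ ^ 2

/-- The distance `d̄_F(v, T)` from a vertex to a set. -/
noncomputable def dbarSet {k : ℕ} (F : Fin N → EuclideanSpace ℝ (Fin k))
    (v : Fin N) (T : Set (Fin N)) : ℝ :=
  sInf { x | ∃ t ∈ T, x = dbar F v t }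

/-- The modified dual Cheeger constant `h̄*(k)`. -/
noncomputable def dualCheegerStar (w : Fin N → Fin N → ℝ) (k : ℕ) : ℝ :=
  sSup { x | ∃ P : Fin k → Finset (Fin N) × Finset (Fin N), IsSubBipartition k P ∧
    x = ⨅ i, (2 * Ew w (P i).1 (P i).2 + 1 / 2 * Ew w ((P i).1 ∪ (P i).2)
        (Finset.univ \ Finset.univ.biUnion (fun j => (P j).1 ∪ (P j).2))) /
      vol w ((P i).1 ∪ (P i).2) }

/-- `G` is bipartite: `V = A ∪ Aᶜ` with no edges inside `A` nor inside `Aᶜ`. -/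
def IsBipartite (w : Fin N → Fin N → ℝ) : Prop :=
  ∃ A : Finset (Fin N), (∀ u ∈ A, ∀ v ∈ A, w u v = 0) ∧
    ∀ u ∈ Aᶜ, ∀ v ∈ Aᶜ, w u v = 0

/-- The equivalence relation generated by adjacency (connected components). -/
def Reach (w : Fin N → Fin N → ℝ) : Fin N → Fin N → Prop :=
  Relation.EqvGen fun u v => 0 < w u v

/-- `w` is the weight function of a weighted cycle on `Fin N`: symmetric,
nonnegative, and positive exactly on consecutive vertices mod `N`. -/
def IsCycleWeight (N : ℕ) (w : Fin N → Fin N → ℝ) : Prop :=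
  (∀ u v, w u v = w v u) ∧ (∀ u v, 0 ≤ w u v) ∧
    ∀ i j : Fin N, 0 < w i j ↔ ((i.val + 1) % N = j.val ∨ (j.val + 1) % N = i.val)

/-- The unweighted cycle on `Fin N`. -/
noncomputable def cycleWeight (N : ℕ) : Fin N → Fin N → ℝ := fun i j =>
  if (i.val + 1) % N = j.val ∨ (j.val + 1) % N = i.val then 1 else 0


section Aux

variable {w : Fin N → Fin N → ℝ}

lemma Ew_nonneg (hw : ∀ u v, 0 ≤ w u v) (A B : Finset (Fin N)) : 0 ≤ Ew w A B :=
  Finset.sum_nonneg fun u _ => Finset.sum_nonneg fun v _ => hw u v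

lemma vol_pos (hG : IsWeightedGraph w) {S : Finset (Fin N)} (hS : S.Nonempty) :
    0 < vol w S :=
  Finset.sum_pos (fun u _ => hG.2.2.2 u) hS

lemma Ew_comm (hsym : ∀ u v, w u v = w v u) (A B : Finset (Fin N)) :
    Ew w A B = Ew w B A := by
  rw [Ew, Finset.sum_comm]
  exact Finset.sum_congr rfl fun u _ => Finset.sum_congr rfl fun v _ => hsym v u

lemma Ew_union_left {A B : Finset (Fin N)} (hd : Disjoint A B) (C : Finset (Fin N)) :
    Ew w (A ∪ B) C = Ew w A C + Ew w B C :=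
  Finset.sum_union hd

lemma Ew_union_right (A : Finset (Fin N)) {B C : Finset (Fin N)} (hd : Disjoint B C) :
    Ew w A (B ∪ C) = Ew w A B + Ew w A C := by
  simp only [Ew, Finset.sum_union hd, Finset.sum_add_distrib]

lemma Ew_add_Ew_self (S : Finset (Fin N)) : Ew w S Sᶜ + Ew w S S = vol w S := by
  rw [Ew, Ew, vol, ← Finset.sum_add_distrib]
  refine Finset.sum_congr rfl fun u _ => ?_
  rw [degree, ← Finset.sum_add_sum_compl S fun v => w u v, add_comm]

lemma key_le (hG : IsWeightedGraph w) {V₁ V₂ : Finset (Fin N)}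
    (hd : Disjoint V₁ V₂) (hne : (V₁ ∪ V₂).Nonempty) :
    phibar w V₁ V₂ ≤ 1 - expansion w (V₁ ∪ V₂) := by
  have hvol := vol_pos hG hne
  have hsplit := Ew_add_Ew_self (w := w) (V₁ ∪ V₂)
  have hSS : Ew w (V₁ ∪ V₂) (V₁ ∪ V₂)
      = Ew w V₁ V₁ + Ew w V₁ V₂ + (Ew w V₂ V₁ + Ew w V₂ V₂) := by
    rw [Ew_union_left hd, Ew_union_right _ hd, Ew_union_right _ hd]
  have hcomm := Ew_comm hG.1 V₂ V₁
  have h11 := Ew_nonneg hG.2.1 V₁ V₁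
  have h22 := Ew_nonneg hG.2.1 V₂ V₂
  have hcross : 2 * Ew w V₁ V₂ ≤ Ew w (V₁ ∪ V₂) (V₁ ∪ V₂) := by linarith
  rw [phibar, expansion, div_le_iff₀ hvol, sub_mul, one_mul, div_mul_cancel₀ _ hvol.ne']
  linarith

lemma key_eq (hG : IsWeightedGraph w) {A0 V₁ V₂ : Finset (Fin N)}
    (hA1 : ∀ u ∈ A0, ∀ v ∈ A0, w u v = 0)
    (hA2 : ∀ u ∈ A0ᶜ, ∀ v ∈ A0ᶜ, w u v = 0)
    (h1 : V₁ ⊆ A0) (h2 : V₂ ⊆ A0ᶜ) (hne : (V₁ ∪ V₂).Nonempty) :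
    phibar w V₁ V₂ = 1 - expansion w (V₁ ∪ V₂) := by
  have hd : Disjoint V₁ V₂ := by
    refine Finset.disjoint_left.mpr fun a ha ha2 => ?_
    exact (Finset.mem_compl.mp (h2 ha2)) (h1 ha)
  have hvol := vol_pos hG hne
  have hsplit := Ew_add_Ew_self (w := w) (V₁ ∪ V₂)
  have hSS : Ew w (V₁ ∪ V₂) (V₁ ∪ V₂)
      = Ew w V₁ V₁ + Ew w V₁ V₂ + (Ew w V₂ V₁ + Ew w V₂ V₂) := by
    rw [Ew_union_left hd, Ew_union_right _ hd, Ew_union_right _ hd]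
  have hcomm := Ew_comm hG.1 V₂ V₁
  have h11 : Ew w V₁ V₁ = 0 :=
    Finset.sum_eq_zero fun u hu => Finset.sum_eq_zero fun v hv => hA1 u (h1 hu) v (h1 hv)
  have h22 : Ew w V₂ V₂ = 0 :=
    Finset.sum_eq_zero fun u hu => Finset.sum_eq_zero fun v hv => hA2 u (h2 hu) v (h2 hv)
  rw [phibar, expansion, eq_sub_iff_add_eq, ← add_div, div_eq_one_iff_eq hvol.ne']
  linarith

lemma ciInf_one_sub {k : ℕ} [Nonempty (Fin k)] (f : Fin k → ℝ) :
    ⨅ i, (1 - f i) = 1 - ⨆ i, f i := by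
  apply le_antisymm
  · obtain ⟨i, hi⟩ := exists_eq_ciSup_of_finite (f := f)
    calc ⨅ j, (1 - f j) ≤ 1 - f i := ciInf_le (Set.finite_range _).bddBelow i
    _ = 1 - ⨆ j, f j := by rw [hi]
  · refine le_ciInf fun i => ?_
    have := le_ciSup (Set.finite_range f).bddAbove i
    linarith

lemma inter_union_sdiff' (S A : Finset (Fin N)) : (S ∩ A) ∪ (S \ A) = S := by
  ext x; simp; tauto

end Aux

/-- Proposition 3.1 (ii): if `G` is bipartite then `h(k) + h̄(k) = 1`. -/
theorem cheeger_add_dualCheeger_of_bipartite {N : ℕ} (w : Fin N → Fin N → ℝ)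
    (hG : IsWeightedGraph w) (hB : IsBipartite w)
    (k : ℕ) (hk : 1 ≤ k) (hkN : k ≤ N) :
    cheeger w k + dualCheeger w k = 1 := by
  haveI : Nonempty (Fin k) := Fin.pos_iff_nonempty.mp hk
  obtain ⟨A0, hA1, hA2⟩ := hB
  set C : Set ℝ := { x | ∃ P : Fin k → Finset (Fin N), IsSubpartition k P ∧
    x = ⨆ i, expansion w (P i) } with hCdef
  set D : Set ℝ := { x | ∃ P : Fin k → Finset (Fin N) × Finset (Fin N),
    IsSubBipartition k P ∧ x = ⨅ i, phibar w (P i).1 (P i).2 } with hDdef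
  have hch : cheeger w k = sInf C := rfl
  have hdu : dualCheeger w k = sSup D := rfl
  -- C is nonempty
  have hCne : C.Nonempty := by
    refine ⟨_, fun i => {Fin.castLE hkN i},
      ⟨fun i => Finset.singleton_nonempty _, fun i j hij => ?_⟩, rfl⟩
    simp only [Finset.disjoint_singleton]
    exact fun h => hij (Fin.castLE_injective hkN h)
  -- every element of C is nonnegative
  have hCpos : ∀ x ∈ C, 0 ≤ x := by
    rintro x ⟨P, ⟨hPne, _⟩, rfl⟩
    obtain ⟨i0⟩ := (inferInstance : Nonempty (Fin k))
    have h0 : 0 ≤ expansion w (P i0) :=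
      div_nonneg (Ew_nonneg hG.2.1 _ _) (vol_pos hG (hPne i0)).le
    exact le_trans h0 (le_ciSup (f := fun i => expansion w (P i)) (Set.finite_range _).bddAbove i0)
  -- a subpartition yields a sub-bipartition with equal complementary value
  have hCD : ∀ x ∈ C, (1 - x) ∈ D := by
    rintro x ⟨P, ⟨hPne, hPd⟩, rfl⟩
    have hun : ∀ i, (P i ∩ A0) ∪ (P i \ A0) = P i := fun i => inter_union_sdiff' _ _
    refine ⟨fun i => (P i ∩ A0, P i \ A0), ⟨?_, ?_, ?_⟩, ?_⟩
    · intro i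
      exact Finset.sdiff_disjoint.symm.mono_left Finset.inter_subset_right
    · intro i j hij
      simpa only [hun] using hPd i j hij
    · intro i
      rw [hun]; exact hPne i
    · have hval : ∀ i, phibar w (P i ∩ A0) (P i \ A0) = 1 - expansion w (P i) := by
        intro i
        have h2 : P i \ A0 ⊆ A0ᶜ := fun u hu =>
          Finset.mem_compl.mpr (Finset.mem_sdiff.mp hu).2
        have := key_eq hG hA1 hA2 Finset.inter_subset_right h2 (by rw [hun]; exact hPne i)
        rwa [hun] at this
      calc (1 - ⨆ i, expansion w (P i)) = ⨅ i, (1 - expansion w (P i)) :=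
            (ciInf_one_sub _).symm
        _ = ⨅ i, phibar w (P i ∩ A0) (P i \ A0) := by
            exact congrArg _ (funext fun i => (hval i).symm)
  -- every element of D is at most 1 - sInf C
  have hD1 : ∀ y ∈ D, y ≤ 1 - sInf C := by
    rintro y ⟨Q, ⟨hQd, hQdd, hQne⟩, rfl⟩
    have hP : IsSubpartition k (fun i => (Q i).1 ∪ (Q i).2) := ⟨hQne, hQdd⟩
    have hx : (⨆ i, expansion w ((Q i).1 ∪ (Q i).2)) ∈ C :=
      ⟨_, hP, rfl⟩
    have h1 : ∀ i, expansion w ((Q i).1 ∪ (Q i).2)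
        ≤ 1 - ⨅ j, phibar w (Q j).1 (Q j).2 := by
      intro i
      have hle := key_le hG (hQd i) (hQne i)
      have h2 : (⨅ j, phibar w (Q j).1 (Q j).2) ≤ phibar w (Q i).1 (Q i).2 :=
        ciInf_le (Set.finite_range _).bddBelow i
      linarith
    have h3 := ciSup_le h1
    have h4 : sInf C ≤ ⨆ i, expansion w ((Q i).1 ∪ (Q i).2) :=
      csInf_le ⟨0, fun x hx => hCpos x hx⟩ hx
    linarith
  have hDbdd : BddAbove D := ⟨1 - sInf C, hD1⟩
  have hDne : D.Nonempty := by
    obtain ⟨x, hx⟩ := hCne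
    exact ⟨1 - x, hCD x hx⟩
  have h5 : sSup D ≤ 1 - sInf C := csSup_le hDne hD1
  have h6 : 1 - sSup D ≤ sInf C := by
    refine le_csInf hCne fun x hx => ?_
    have := le_csSup hDbdd (hCD x hx)
    linarith
  rw [hch, hdu]
  linarith


end DualCheeger
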